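/- Let G be a finite abelian group with G = G₁ × G₂ where |G₁| = p₁^α₁, |G₂| = p₂^α₂ for distinct primes p₁, p₂. Then the number of diamonds in the subgroup lattice of G equals dm(G₁)·|L(G₂)| + dm(G₂)·|L(G₁)| + 6·dm(G₁)·dm(G₂), where |L(H)| denotes the number of subgroups of H. -/

import Mathlib

/-- `(A,B,C)` form a diamond: pairwise distinct subgroups with equal pairwise
meets and equal pairwise joins. -/
def IsDiamondTriple {G : Type*} [AddGroup G] (A B C : AddSubgroup G) : Prop :=
  A ≠ B ∧ A ≠ C ∧ B ≠ C ∧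
    A ⊓ B = B ⊓ C ∧ B ⊓ C = C ⊓ A ∧
    A ⊔ B = B ⊔ C ∧ B ⊔ C = C ⊔ A

/-- The number of (unordered) diamonds in the subgroup lattice of `G`. -/
noncomputable def dm (G : Type*) [AddGroup G] : ℕ :=
  Set.ncard {T : Set (AddSubgroup G) | ∃ A B C : AddSubgroup G,
    T = {A, B, C} ∧ IsDiamondTriple A B C}


set_option linter.unusedSectionVars false


namespace DiamondCount

variable {L : Type*} [Lattice L]

def IsDia (A B C : L) : Prop :=
  A ≠ B ∧ A ≠ C ∧ B ≠ C ∧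
    A ⊓ B = B ⊓ C ∧ B ⊓ C = C ⊓ A ∧
    A ⊔ B = B ⊔ C ∧ B ⊔ C = C ⊔ A

def diaSet (L : Type*) [Lattice L] : Set (Set L) :=
  {T | ∃ A B C : L, T = {A, B, C} ∧ IsDia A B C}

def odSet (L : Type*) [Lattice L] : Set (L × L × L) :=
  {t | IsDia t.1 t.2.1 t.2.2}

noncomputable def dmL (L : Type*) [Lattice L] : ℕ := (diaSet L).ncard

lemma IsDia.swap₁ {A B C : L} (h : IsDia A B C) : IsDia B A C := by
  obtain ⟨h1, h2, h3, h4, h5, h6, h7⟩ := h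
  refine ⟨h1.symm, h3, h2, ?_, ?_, ?_, ?_⟩
  · rw [inf_comm B A, h4, h5, inf_comm C A]
  · rw [inf_comm A C, ← h5, inf_comm B C]
  · rw [sup_comm B A, h6, h7, sup_comm C A]
  · rw [sup_comm A C, ← h7, sup_comm B C]

lemma IsDia.swap₂ {A B C : L} (h : IsDia A B C) : IsDia A C B := by
  obtain ⟨h1, h2, h3, h4, h5, h6, h7⟩ := h
  refine ⟨h2, h1, h3.symm, ?_, ?_, ?_, ?_⟩
  · rw [inf_comm A C, ← h5, inf_comm B C]
  · rw [inf_comm C B, ← h4, inf_comm A B]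
  · rw [sup_comm A C, ← h7, sup_comm B C]
  · rw [sup_comm C B, ← h6, sup_comm A B]

lemma eq_or_distinct {A B C : L}
    (h4 : A ⊓ B = B ⊓ C) (h5 : B ⊓ C = C ⊓ A)
    (h6 : A ⊔ B = B ⊔ C) (h7 : B ⊔ C = C ⊔ A) :
    (A = B ∧ B = C) ∨ (A ≠ B ∧ A ≠ C ∧ B ≠ C) := by
  by_cases hab : A = B
  · subst hab
    left
    refine ⟨rfl, ?_⟩
    have hle : A ≤ C := by
      have : A ⊓ C = A := by rw [inf_comm A C, ← h5, ← h4, inf_idem]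
      exact inf_eq_left.mp this
    have hge : C ≤ A := by
      have : A ⊔ C = A := by rw [sup_comm A C, ← h7, ← h6, sup_idem]
      exact sup_eq_left.mp this
    exact le_antisymm hle hge
  by_cases hac : A = C
  · subst hac
    exfalso
    apply hab
    have hle : A ≤ B := inf_eq_right.mp (by rw [h5, inf_idem])
    have hge : B ≤ A := sup_eq_right.mp (by rw [h7, sup_idem])
    exact le_antisymm hle hge
  by_cases hbc : B = C
  · subst hbc
    exfalso
    apply hab
    have h' : A ⊓ B = B := by rw [h4, inf_idem]
    have h'' : A ⊔ B = B := by rw [h6, sup_idem]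
    exact le_antisymm (sup_eq_right.mp h'') (inf_eq_right.mp h')
  exact Or.inr ⟨hab, hac, hbc⟩

end DiamondCount
namespace DiamondCount

variable {α β : Type*} [Lattice α] [Lattice β]

omit [Lattice α] [Lattice β] in
lemma ne_of_fst_ne {x y : α × β} (h : x.1 ≠ y.1) : x ≠ y := fun e => h (congrArg Prod.fst e)
omit [Lattice α] [Lattice β] in
lemma ne_of_snd_ne {x y : α × β} (h : x.2 ≠ y.2) : x ≠ y := fun e => h (congrArg Prod.snd e)

lemma isDia_prod_iff (x y z : α × β) :
    IsDia x y z ↔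
      (IsDia x.1 y.1 z.1 ∧ x.2 = y.2 ∧ y.2 = z.2) ∨
      ((x.1 = y.1 ∧ y.1 = z.1) ∧ IsDia x.2 y.2 z.2) ∨
      (IsDia x.1 y.1 z.1 ∧ IsDia x.2 y.2 z.2) := by
  constructor
  · rintro ⟨h1, h2, h3, h4, h5, h6, h7⟩
    have e4a : x.1 ⊓ y.1 = y.1 ⊓ z.1 := congrArg Prod.fst h4
    have e5a : y.1 ⊓ z.1 = z.1 ⊓ x.1 := congrArg Prod.fst h5
    have e6a : x.1 ⊔ y.1 = y.1 ⊔ z.1 := congrArg Prod.fst h6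
    have e7a : y.1 ⊔ z.1 = z.1 ⊔ x.1 := congrArg Prod.fst h7
    have e4b : x.2 ⊓ y.2 = y.2 ⊓ z.2 := congrArg Prod.snd h4
    have e5b : y.2 ⊓ z.2 = z.2 ⊓ x.2 := congrArg Prod.snd h5
    have e6b : x.2 ⊔ y.2 = y.2 ⊔ z.2 := congrArg Prod.snd h6
    have e7b : y.2 ⊔ z.2 = z.2 ⊔ x.2 := congrArg Prod.snd h7
    rcases eq_or_distinct e4a e5a e6a e7a with hCa | hDa
    · rcases eq_or_distinct e4b e5b e6b e7b with hCb | hDb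
      · exact absurd (Prod.ext hCa.1 hCb.1) h1
      · exact Or.inr (Or.inl ⟨hCa, hDb.1, hDb.2.1, hDb.2.2, e4b, e5b, e6b, e7b⟩)
    · rcases eq_or_distinct e4b e5b e6b e7b with hCb | hDb
      · exact Or.inl ⟨⟨hDa.1, hDa.2.1, hDa.2.2, e4a, e5a, e6a, e7a⟩, hCb⟩
      · exact Or.inr (Or.inr ⟨⟨hDa.1, hDa.2.1, hDa.2.2, e4a, e5a, e6a, e7a⟩,
          hDb.1, hDb.2.1, hDb.2.2, e4b, e5b, e6b, e7b⟩)
  · rintro (⟨⟨h1, h2, h3, h4, h5, h6, h7⟩, hb1, hb2⟩ |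
      ⟨⟨ha1, ha2⟩, h1, h2, h3, h4, h5, h6, h7⟩ |
      ⟨⟨h1, h2, h3, h4, h5, h6, h7⟩, g1, g2, g3, g4, g5, g6, g7⟩)
    · have c4 : x.2 ⊓ y.2 = y.2 ⊓ z.2 := by rw [hb1, hb2]
      have c5 : y.2 ⊓ z.2 = z.2 ⊓ x.2 := by rw [hb1, hb2]
      have c6 : x.2 ⊔ y.2 = y.2 ⊔ z.2 := by rw [hb1, hb2]
      have c7 : y.2 ⊔ z.2 = z.2 ⊔ x.2 := by rw [hb1, hb2]
      exact ⟨ne_of_fst_ne h1, ne_of_fst_ne h2, ne_of_fst_ne h3,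
        Prod.ext h4 c4, Prod.ext h5 c5, Prod.ext h6 c6, Prod.ext h7 c7⟩
    · have c4 : x.1 ⊓ y.1 = y.1 ⊓ z.1 := by rw [ha1, ha2]
      have c5 : y.1 ⊓ z.1 = z.1 ⊓ x.1 := by rw [ha1, ha2]
      have c6 : x.1 ⊔ y.1 = y.1 ⊔ z.1 := by rw [ha1, ha2]
      have c7 : y.1 ⊔ z.1 = z.1 ⊔ x.1 := by rw [ha1, ha2]
      exact ⟨ne_of_snd_ne h1, ne_of_snd_ne h2, ne_of_snd_ne h3,
        Prod.ext c4 h4, Prod.ext c5 h5, Prod.ext c6 h6, Prod.ext c7 h7⟩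
    · exact ⟨ne_of_fst_ne h1, ne_of_fst_ne h2, ne_of_fst_ne h3,
        Prod.ext h4 g4, Prod.ext h5 g5, Prod.ext h6 g6, Prod.ext h7 g7⟩

end DiamondCount
namespace DiamondCount

variable {α β : Type*} [Lattice α] [Lattice β]

section ProdCount
variable (α β)

def S1 : Set ((α × β) × (α × β) × (α × β)) :=
  {t | IsDia t.1.1 t.2.1.1 t.2.2.1 ∧ t.1.2 = t.2.1.2 ∧ t.2.1.2 = t.2.2.2}

def S2 : Set ((α × β) × (α × β) × (α × β)) :=
  {t | (t.1.1 = t.2.1.1 ∧ t.2.1.1 = t.2.2.1) ∧ IsDia t.1.2 t.2.1.2 t.2.2.2}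

def S3 : Set ((α × β) × (α × β) × (α × β)) :=
  {t | IsDia t.1.1 t.2.1.1 t.2.2.1 ∧ IsDia t.1.2 t.2.1.2 t.2.2.2}

lemma odSet_prod_eq : odSet (α × β) = S1 α β ∪ S2 α β ∪ S3 α β := by
  ext t
  have := isDia_prod_iff t.1 t.2.1 t.2.2
  simp only [odSet, S1, S2, S3, Set.mem_union, Set.mem_setOf_eq]
  tauto

def e1 : ↥(S1 α β) ≃ ↥(odSet α) × β where
  toFun t := (⟨(t.1.1.1, t.1.2.1.1, t.1.2.2.1), t.2.1⟩, t.1.1.2)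
  invFun sb := ⟨((sb.1.1.1, sb.2), (sb.1.1.2.1, sb.2), (sb.1.1.2.2, sb.2)),
    ⟨sb.1.2, rfl, rfl⟩⟩
  left_inv := by
    rintro ⟨⟨⟨a1, b1⟩, ⟨a2, b2⟩, ⟨a3, b3⟩⟩, hd, h1, h2⟩
    simp only at h1 h2
    subst h1; subst h2
    rfl
  right_inv := by
    rintro ⟨⟨⟨A, B, C⟩, hd⟩, b⟩
    rfl

def e2 : ↥(S2 α β) ≃ ↥(odSet β) × α where
  toFun t := (⟨(t.1.1.2, t.1.2.1.2, t.1.2.2.2), t.2.2⟩, t.1.1.1)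
  invFun sb := ⟨((sb.2, sb.1.1.1), (sb.2, sb.1.1.2.1), (sb.2, sb.1.1.2.2)),
    ⟨⟨rfl, rfl⟩, sb.1.2⟩⟩
  left_inv := by
    rintro ⟨⟨⟨a1, b1⟩, ⟨a2, b2⟩, ⟨a3, b3⟩⟩, ⟨h1, h2⟩, hd⟩
    simp only at h1 h2
    subst h1; subst h2
    rfl
  right_inv := by
    rintro ⟨⟨⟨A, B, C⟩, hd⟩, b⟩
    rfl

def e3 : ↥(S3 α β) ≃ ↥(odSet α) × ↥(odSet β) where
  toFun t := (⟨(t.1.1.1, t.1.2.1.1, t.1.2.2.1), t.2.1⟩,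
    ⟨(t.1.1.2, t.1.2.1.2, t.1.2.2.2), t.2.2⟩)
  invFun sb := ⟨((sb.1.1.1, sb.2.1.1), (sb.1.1.2.1, sb.2.1.2.1), (sb.1.1.2.2, sb.2.1.2.2)),
    ⟨sb.1.2, sb.2.2⟩⟩
  left_inv := by
    rintro ⟨⟨⟨a1, b1⟩, ⟨a2, b2⟩, ⟨a3, b3⟩⟩, h1, h2⟩
    rfl
  right_inv := by
    rintro ⟨⟨⟨A, B, C⟩, hd⟩, ⟨⟨D, E, F⟩, hd'⟩⟩
    rfl

variable [Finite α] [Finite β]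

lemma disj12 : Disjoint (S1 α β) (S2 α β) := by
  rw [Set.disjoint_left]
  rintro t ⟨hd, -⟩ ⟨⟨h1, -⟩, -⟩
  exact hd.1 h1

lemma disj13 : Disjoint (S1 α β) (S3 α β) := by
  rw [Set.disjoint_left]
  rintro t ⟨-, h1, -⟩ ⟨-, hd⟩
  exact hd.1 h1

lemma disj23 : Disjoint (S2 α β) (S3 α β) := by
  rw [Set.disjoint_left]
  rintro t ⟨⟨h1, -⟩, -⟩ ⟨hd, -⟩
  exact hd.1 h1

lemma ncard_S1 : (S1 α β).ncard = (odSet α).ncard * Nat.card β := by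
  rw [← Nat.card_coe_set_eq, ← Nat.card_coe_set_eq,
    Nat.card_congr (e1 α β), Nat.card_prod]

lemma ncard_S2 : (S2 α β).ncard = (odSet β).ncard * Nat.card α := by
  rw [← Nat.card_coe_set_eq, ← Nat.card_coe_set_eq,
    Nat.card_congr (e2 α β), Nat.card_prod]

lemma ncard_S3 : (S3 α β).ncard = (odSet α).ncard * (odSet β).ncard := by
  rw [← Nat.card_coe_set_eq, ← Nat.card_coe_set_eq, ← Nat.card_coe_set_eq,
    Nat.card_congr (e3 α β), Nat.card_prod]

lemma odcard_prod :
    (odSet (α × β)).ncard =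
      (odSet α).ncard * Nat.card β + (odSet β).ncard * Nat.card α +
        (odSet α).ncard * (odSet β).ncard := by
  rw [odSet_prod_eq, Set.ncard_union_eq (by
      exact Set.disjoint_union_left.mpr ⟨disj13 α β, disj23 α β⟩) (Set.toFinite _)
      (Set.toFinite _),
    Set.ncard_union_eq (disj12 α β) (Set.toFinite _) (Set.toFinite _),
    ncard_S1, ncard_S2, ncard_S3]

end ProdCount

end DiamondCount
namespace DiamondCount

variable {L : Type*} [Lattice L]

lemma ncard_six {A B C : L} [Finite L] (h1 : A ≠ B) (h2 : A ≠ C) (h3 : B ≠ C) :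
    ({(A, B, C), (A, C, B), (B, A, C), (B, C, A), (C, A, B), (C, B, A)} :
      Set (L × L × L)).ncard = 6 := by
  have h1' : B ≠ A := h1.symm
  have h2' : C ≠ A := h2.symm
  have h3' : C ≠ B := h3.symm
  rw [Set.ncard_insert_of_notMem (by
      simp only [Set.mem_insert_iff, Set.mem_singleton_iff, Prod.mk.injEq, not_or]; tauto),
    Set.ncard_insert_of_notMem (by
      simp only [Set.mem_insert_iff, Set.mem_singleton_iff, Prod.mk.injEq, not_or]; tauto),
    Set.ncard_insert_of_notMem (by
      simp only [Set.mem_insert_iff, Set.mem_singleton_iff, Prod.mk.injEq, not_or]; tauto),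
    Set.ncard_insert_of_notMem (by
      simp only [Set.mem_insert_iff, Set.mem_singleton_iff, Prod.mk.injEq, not_or]; tauto),
    Set.ncard_insert_of_notMem (by
      simp only [Set.mem_singleton_iff, Prod.mk.injEq, not_and]; tauto),
    Set.ncard_singleton]

lemma fiber_eq {A B C : L} (h : IsDia A B C) :
    {t : L × L × L | IsDia t.1 t.2.1 t.2.2 ∧ ({t.1, t.2.1, t.2.2} : Set L) = {A, B, C}} =
      ({(A, B, C), (A, C, B), (B, A, C), (B, C, A), (C, A, B), (C, B, A)} :
        Set (L × L × L)) := by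
  ext ⟨X, Y, Z⟩
  simp only [Set.mem_setOf_eq, Set.mem_insert_iff, Set.mem_singleton_iff, Prod.mk.injEq]
  constructor
  · rintro ⟨⟨hXY, hXZ, hYZ, -⟩, hset⟩
    have hX : X ∈ ({A, B, C} : Set L) := by rw [← hset]; simp
    have hY : Y ∈ ({A, B, C} : Set L) := by rw [← hset]; simp
    have hZ : Z ∈ ({A, B, C} : Set L) := by rw [← hset]; simp
    simp only [Set.mem_insert_iff, Set.mem_singleton_iff] at hX hY hZ
    rcases hX with rfl | rfl | rfl <;> rcases hY with rfl | rfl | rfl <;>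
      rcases hZ with rfl | rfl | rfl <;> simp_all
  · have hperm : ∀ X Y Z : L, IsDia X Y Z → ({X, Y, Z} : Set L) = {A, B, C} →
        IsDia X Y Z ∧ ({X, Y, Z} : Set L) = {A, B, C} := fun _ _ _ a b => ⟨a, b⟩
    rintro (⟨rfl, rfl, rfl⟩ | ⟨rfl, rfl, rfl⟩ | ⟨rfl, rfl, rfl⟩ | ⟨rfl, rfl, rfl⟩ |
      ⟨rfl, rfl, rfl⟩ | ⟨rfl, rfl, rfl⟩)
    · exact ⟨h, rfl⟩
    · exact ⟨h.swap₂, by ext x; simp; tauto⟩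
    · exact ⟨h.swap₁, by ext x; simp; tauto⟩
    · exact ⟨h.swap₁.swap₂, by ext x; simp; tauto⟩
    · exact ⟨h.swap₂.swap₁, by ext x; simp; tauto⟩
    · exact ⟨h.swap₂.swap₁.swap₂, by ext x; simp; tauto⟩

variable (L) in
noncomputable def fib (t : ↥(odSet L)) : ↥(diaSet L) :=
  ⟨{t.1.1, t.1.2.1, t.1.2.2}, t.1.1, t.1.2.1, t.1.2.2, rfl, t.2⟩

lemma odcard_eq (L : Type*) [Lattice L] [Finite L] :
    (odSet L).ncard = 6 * dmL L := by
  classical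
  haveI : Fintype ↥(diaSet L) := Fintype.ofFinite _
  haveI : Fintype ↥(odSet L) := Fintype.ofFinite _
  haveI : ∀ T : ↥(diaSet L), Fintype {t : ↥(odSet L) // fib L t = T} :=
    fun T => Fintype.ofFinite _
  have key : ∀ T : ↥(diaSet L), Nat.card {t : ↥(odSet L) // fib L t = T} = 6 := by
    intro T
    obtain ⟨A, B, C, hT, hD⟩ := T.2
    have e : {t : ↥(odSet L) // fib L t = T} ≃
        ↥{t : L × L × L | IsDia t.1 t.2.1 t.2.2 ∧ ({t.1, t.2.1, t.2.2} : Set L) = {A, B, C}} :=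
      { toFun := fun t => ⟨t.1.1, t.1.2, (congrArg Subtype.val t.2).trans hT⟩
        invFun := fun t => ⟨⟨t.1, t.2.1⟩, Subtype.ext (t.2.2.trans hT.symm)⟩
        left_inv := fun t => rfl
        right_inv := fun t => rfl }
    rw [Nat.card_congr e, Nat.card_coe_set_eq, fiber_eq hD,
      ncard_six hD.1 hD.2.1 hD.2.2.1]
  rw [← Nat.card_coe_set_eq, Nat.card_congr (Equiv.sigmaFiberEquiv (fib L)).symm,
    Nat.card_eq_fintype_card, Fintype.card_sigma]
  have hc : ∀ T : ↥(diaSet L), Fintype.card {t : ↥(odSet L) // fib L t = T} = 6 := by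
    intro T; rw [← Nat.card_eq_fintype_card, key T]
  rw [Finset.sum_congr rfl fun T _ => hc T, Finset.sum_const, Finset.card_univ,
    smul_eq_mul, mul_comm]
  congr 1
  rw [dmL, ← Nat.card_coe_set_eq, Nat.card_eq_fintype_card]

end DiamondCount
namespace DiamondCount

lemma dmL_prod (α β : Type*) [Lattice α] [Lattice β] [Finite α] [Finite β] :
    dmL (α × β) = dmL α * Nat.card β + dmL β * Nat.card α + 6 * dmL α * dmL β := by
  have h := odcard_prod α β
  rw [odcard_eq, odcard_eq, odcard_eq] at h
  have h6 : 6 * dmL (α × β) =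
      6 * (dmL α * Nat.card β + dmL β * Nat.card α + 6 * dmL α * dmL β) := by
    rw [h]; ring
  omega

lemma dmL_congr {α β : Type*} [Lattice α] [Lattice β] (e : α ≃o β) : dmL α = dmL β := by
  have himg : diaSet β = (fun S : Set α => e '' S) '' diaSet α := by
    ext T
    constructor
    · rintro ⟨A, B, C, rfl, hD⟩
      refine ⟨{e.symm A, e.symm B, e.symm C}, ⟨e.symm A, e.symm B, e.symm C, rfl, ?_⟩, ?_⟩
      · obtain ⟨h1, h2, h3, h4, h5, h6, h7⟩ := hD
        refine ⟨fun h => h1 (by simpa using congrArg e h),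
          fun h => h2 (by simpa using congrArg e h),
          fun h => h3 (by simpa using congrArg e h), ?_, ?_, ?_, ?_⟩
        · simpa [e.symm.map_inf] using congrArg e.symm h4
        · simpa [e.symm.map_inf] using congrArg e.symm h5
        · simpa [e.symm.map_sup] using congrArg e.symm h6
        · simpa [e.symm.map_sup] using congrArg e.symm h7
      · simp [Set.image_insert_eq]
    · rintro ⟨S, ⟨A, B, C, rfl, hD⟩, rfl⟩
      refine ⟨e A, e B, e C, by simp [Set.image_insert_eq], ?_⟩
      obtain ⟨h1, h2, h3, h4, h5, h6, h7⟩ := hD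
      exact ⟨fun h => h1 (e.injective h), fun h => h2 (e.injective h),
        fun h => h3 (e.injective h),
        by rw [← e.map_inf, ← e.map_inf, h4],
        by rw [← e.map_inf, ← e.map_inf, h5],
        by rw [← e.map_sup, ← e.map_sup, h6],
        by rw [← e.map_sup, ← e.map_sup, h7]⟩
  rw [dmL, dmL, himg, Set.ncard_image_of_injective _ (Set.image_injective.mpr e.injective)]

end DiamondCount
namespace DiamondCount

variable {G₁ G₂ : Type*} [AddCommGroup G₁] [AddCommGroup G₂] [Finite G₁] [Finite G₂]

lemma smul_recover {G : Type*} [AddGroup G] [Finite G] {a : G} {n : ℕ}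
    (hcop : Nat.Coprime n (addOrderOf a)) : ∃ m : ℕ, m • (n • a) = a := by
  rcases eq_or_ne (addOrderOf a) 1 with h1 | h1
  · have ha : a = 0 := by rwa [AddMonoid.addOrderOf_eq_one_iff] at h1
    exact ⟨1, by simp [ha]⟩
  · have hpos : 0 < addOrderOf a := addOrderOf_pos a
    have hlt : 1 < addOrderOf a := lt_of_le_of_ne hpos (Ne.symm h1)
    obtain ⟨m, -, hm⟩ := Nat.exists_mul_mod_eq_one_of_coprime hcop hlt
    refine ⟨m, ?_⟩
    rw [← mul_nsmul a n m, ← mod_addOrderOf_nsmul, hm, one_nsmul]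

lemma mem_left (hco : Nat.Coprime (Nat.card G₁) (Nat.card G₂))
    (H : AddSubgroup (G₁ × G₂)) {a : G₁} {b : G₂} (hab : (a, b) ∈ H) :
    ((a, 0) : G₁ × G₂) ∈ H := by
  have h1 : ((Nat.card G₂ • a, 0) : G₁ × G₂) ∈ H := by
    have hmem := AddSubgroup.nsmul_mem H hab (Nat.card G₂)
    have he : Nat.card G₂ • ((a, b) : G₁ × G₂) = (Nat.card G₂ • a, 0) := by
      rw [Prod.smul_mk]
      congr 1
      exact card_nsmul_eq_zero'
    rwa [he] at hmem
  have hdvd : addOrderOf a ∣ Nat.card G₁ := addOrderOf_dvd_natCard a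
  have hcop : Nat.Coprime (Nat.card G₂) (addOrderOf a) :=
    ((Nat.Coprime.coprime_dvd_left hdvd hco).symm)
  obtain ⟨m, hm⟩ := smul_recover hcop
  have : m • ((Nat.card G₂ • a, (0 : G₂)) : G₁ × G₂) = (a, 0) := by
    rw [Prod.smul_mk, hm, smul_zero]
  rw [← this]
  exact AddSubgroup.nsmul_mem H h1 m

lemma mem_right (hco : Nat.Coprime (Nat.card G₁) (Nat.card G₂))
    (H : AddSubgroup (G₁ × G₂)) {a : G₁} {b : G₂} (hab : (a, b) ∈ H) :
    ((0, b) : G₁ × G₂) ∈ H := by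
  have h1 : (((0 : G₁), Nat.card G₁ • b) : G₁ × G₂) ∈ H := by
    have hmem := AddSubgroup.nsmul_mem H hab (Nat.card G₁)
    have he : Nat.card G₁ • ((a, b) : G₁ × G₂) = (0, Nat.card G₁ • b) := by
      rw [Prod.smul_mk]
      congr 1
      exact card_nsmul_eq_zero'
    rwa [he] at hmem
  have hdvd : addOrderOf b ∣ Nat.card G₂ := addOrderOf_dvd_natCard b
  have hcop : Nat.Coprime (Nat.card G₁) (addOrderOf b) :=
    (Nat.Coprime.coprime_dvd_left hdvd hco.symm).symm
  obtain ⟨m, hm⟩ := smul_recover hcop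
  have : m • (((0 : G₁), Nat.card G₁ • b) : G₁ × G₂) = (0, b) := by
    rw [Prod.smul_mk, hm, smul_zero]
  rw [← this]
  exact AddSubgroup.nsmul_mem H h1 m

noncomputable def latticeIso (hco : Nat.Coprime (Nat.card G₁) (Nat.card G₂)) :
    AddSubgroup (G₁ × G₂) ≃o AddSubgroup G₁ × AddSubgroup G₂ :=
  Equiv.toOrderIso
    { toFun := fun H => (H.map (AddMonoidHom.fst G₁ G₂), H.map (AddMonoidHom.snd G₁ G₂))
      invFun := fun P => P.1.prod P.2
      left_inv := by
        intro H
        simp only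
        apply le_antisymm
        · rintro ⟨a, b⟩ hab
          obtain ⟨ha, hb⟩ := AddSubgroup.mem_prod.mp hab
          obtain ⟨x, hx, hxa⟩ := AddSubgroup.mem_map.mp ha
          obtain ⟨y, hy, hyb⟩ := AddSubgroup.mem_map.mp hb
          have h1 : ((a, 0) : G₁ × G₂) ∈ H := by
            have := mem_left hco H (show (x.1, x.2) ∈ H by simpa using hx)
            rwa [show x.1 = a from hxa] at this
          have h2 : ((0, b) : G₁ × G₂) ∈ H := by
            have := mem_right hco H (show (y.1, y.2) ∈ H by simpa using hy)
            rwa [show y.2 = b from hyb] at this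
          have := H.add_mem h1 h2
          simpa using this
        · intro x hx
          exact AddSubgroup.mem_prod.mpr
            ⟨AddSubgroup.mem_map.mpr ⟨x, hx, rfl⟩, AddSubgroup.mem_map.mpr ⟨x, hx, rfl⟩⟩
      right_inv := by
        rintro ⟨K, L⟩
        simp only
        refine Prod.ext ?_ ?_
        · ext a
          simp only [AddSubgroup.mem_map]
          constructor
          · rintro ⟨x, hx, rfl⟩
            exact (AddSubgroup.mem_prod.mp hx).1
          · intro ha
            exact ⟨(a, 0), AddSubgroup.mem_prod.mpr ⟨ha, L.zero_mem⟩, rfl⟩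
        · ext b
          simp only [AddSubgroup.mem_map]
          constructor
          · rintro ⟨x, hx, rfl⟩
            exact (AddSubgroup.mem_prod.mp hx).2
          · intro hb
            exact ⟨(0, b), AddSubgroup.mem_prod.mpr ⟨K.zero_mem, hb⟩, rfl⟩ }
    (fun H H' h => ⟨AddSubgroup.map_mono h, AddSubgroup.map_mono h⟩)
    (fun P Q h => AddSubgroup.prod_mono h.1 h.2)

end DiamondCount

theorem stmt0 (G₁ G₂ : Type*) [AddCommGroup G₁] [AddCommGroup G₂]
    [Finite G₁] [Finite G₂] (p₁ p₂ α₁ α₂ : ℕ)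
    (hp₁ : p₁.Prime) (hp₂ : p₂.Prime) (hne : p₁ ≠ p₂)
    (h₁ : Nat.card G₁ = p₁ ^ α₁) (h₂ : Nat.card G₂ = p₂ ^ α₂) :
    dm (G₁ × G₂) =
      dm G₁ * Nat.card (AddSubgroup G₂) + dm G₂ * Nat.card (AddSubgroup G₁) +
        6 * dm G₁ * dm G₂ := by
  have hco : Nat.Coprime (Nat.card G₁) (Nat.card G₂) := by
    rw [h₁, h₂]
    exact Nat.Coprime.pow _ _ ((Nat.coprime_primes hp₁ hp₂).mpr hne)
  calc dm (G₁ × G₂) = DiamondCount.dmL (AddSubgroup (G₁ × G₂)) := rfl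
    _ = DiamondCount.dmL (AddSubgroup G₁ × AddSubgroup G₂) :=
        DiamondCount.dmL_congr (DiamondCount.latticeIso hco)
    _ = DiamondCount.dmL (AddSubgroup G₁) * Nat.card (AddSubgroup G₂) +
          DiamondCount.dmL (AddSubgroup G₂) * Nat.card (AddSubgroup G₁) +
          6 * DiamondCount.dmL (AddSubgroup G₁) * DiamondCount.dmL (AddSubgroup G₂) :=
        DiamondCount.dmL_prod _ _
    _ = dm G₁ * Nat.card (AddSubgroup G₂) + dm G₂ * Nat.card (AddSubgroup G₁) +
          6 * dm G₁ * dm G₂ := rfl
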